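/- (Discrete mass conservation.) Let τ > 0, m ≥ 1, let D be a real symmetric m×m matrix (acting on ℂ^m through the entrywise embedding ℝ ↪ ℂ), and let a, b, c ∈ ℂ^m satisfy, for every component 1 ≤ j ≤ m, i (a_j − c_j)/(2τ) − (D((a + c)/2))_j + |b_j|² (a_j + c_j)/2 = 0. Then ∑_{j=1}^m |a_j|² = ∑_{j=1}^m |c_j|². -/

import Mathlib

open Matrix

/-- Discrete mass conservation: if `a, b, c ∈ ℂ^m` satisfy the linearized
three-level step `i (a_j − c_j)/(2τ) − (D((a+c)/2))_j + |b_j|²(a_j+c_j)/2 = 0`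
with `D` real symmetric, then `∑_j |a_j|² = ∑_j |c_j|²`. -/
theorem discrete_mass_conservation
    (τ : ℝ) (hτ : 0 < τ) (m : ℕ) (hm : 1 ≤ m)
    (D : Matrix (Fin m) (Fin m) ℝ) (hD : D.IsSymm)
    (a b c : Fin m → ℂ)
    (hstep : ∀ j : Fin m,
      Complex.I * (a j - c j) / (2 * (τ : ℂ)) -
        (D.map (Complex.ofReal) *ᵥ fun i => (a i + c i) / 2) j +
        (‖b j‖ : ℂ) ^ 2 * (a j + c j) / 2 = 0) :
    (∑ j, ‖a j‖ ^ 2) = ∑ j, ‖c j‖ ^ 2 := by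
  classical
  set u : Fin m → ℂ := fun j => (a j + c j) / 2 with hu
  have hτ0 : (2 * (τ : ℂ)) ≠ 0 := by
    simp [Complex.ofReal_ne_zero, hτ.ne']
  -- rewrite step
  have key : ∀ j, Complex.I * (a j - c j) =
      2 * (τ:ℂ) * ((D.map Complex.ofReal *ᵥ u) j - (‖b j‖:ℂ)^2 * u j) := by
    intro j
    have h := hstep j
    have e : Complex.I * (a j - c j) = 2 * (τ:ℂ) * (Complex.I * (a j - c j) / (2 * (τ:ℂ))) := by
      rw [mul_div_assoc', mul_comm (2 * (τ:ℂ)), mul_div_assoc, div_self hτ0, mul_one]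
    have huj : u j = (a j + c j) / 2 := rfl
    rw [e]
    linear_combination (2 * (τ:ℂ)) * h + 2 * (τ:ℂ) * (‖b j‖:ℂ) ^ 2 * huj
  set R : ℂ := ∑ j, ((D.map Complex.ofReal *ᵥ u) j - (‖b j‖:ℂ)^2 * u j)
      * (starRingEnd ℂ) (u j) with hR
  have hS : Complex.I * ∑ j, (a j - c j) * (starRingEnd ℂ) (u j)
      = 2 * (τ:ℂ) * R := by
    rw [hR, Finset.mul_sum, Finset.mul_sum]
    refine Finset.sum_congr rfl fun j _ => ?_
    rw [← mul_assoc, key j]; ring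
  have hRreal : (starRingEnd ℂ) R = R := by
    rw [hR]
    simp only [map_sum, map_sub, _root_.map_mul, mulVec, dotProduct, Matrix.map_apply,
      Complex.conj_conj, map_pow, Complex.conj_ofReal, sub_mul, Finset.sum_mul]
    rw [Finset.sum_sub_distrib, Finset.sum_sub_distrib]
    congr 1
    · rw [Finset.sum_comm]
      refine Finset.sum_congr rfl fun j _ => Finset.sum_congr rfl fun k _ => ?_
      rw [hD.apply k j]; ring
    · refine Finset.sum_congr rfl fun j _ => ?_; ring
  have hconj : (starRingEnd ℂ) (Complex.I * ∑ j, (a j - c j) * (starRingEnd ℂ) (u j))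
      = Complex.I * ∑ j, (a j - c j) * (starRingEnd ℂ) (u j) := by
    rw [hS, _root_.map_mul, _root_.map_mul, hRreal, Complex.conj_ofReal, map_ofNat, ← hS]
  have him : (Complex.I * ∑ j, (a j - c j) * (starRingEnd ℂ) (u j)).im = 0 := by
    have h2 := congrArg Complex.im hconj
    rw [Complex.conj_im] at h2
    linarith
  have hre : (∑ j, (a j - c j) * (starRingEnd ℂ) (u j)).re = 0 := by
    rw [Complex.mul_im] at him
    simpa using him
  have hterm : ∀ z w : ℂ, ((z - w) * (starRingEnd ℂ) ((z + w) / 2)).re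
      = (‖z‖ ^ 2 - ‖w‖ ^ 2) / 2 := by
    intro z w
    rw [Complex.sq_norm, Complex.sq_norm,
      Complex.normSq_apply, Complex.normSq_apply]
    simp [Complex.mul_re, Complex.div_re, Complex.div_im, Complex.conj_re, Complex.conj_im,
      Complex.normSq, map_ofNat, Complex.add_re, Complex.add_im, Complex.sub_re, Complex.sub_im]
    ring
  rw [Complex.re_sum] at hre
  have : ∑ j, (‖a j‖ ^ 2 - ‖c j‖ ^ 2) / 2 = 0 := by
    rw [← hre]
    exact Finset.sum_congr rfl fun j _ => (hterm (a j) (c j)).symm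
  rw [← Finset.sum_div, Finset.sum_sub_distrib] at this
  have := (div_eq_zero_iff.mp this).resolve_right (by norm_num)
  linarith
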